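/- Let T1 and T2 be non-repeating binary decision trees over the same finite feature set F and class set C, and suppose T1 and T2 are equivalent (T1(x) = T2(x) for every input x : F → Bool). Then every pair of compatible rules (π1 of T1, π2 of T2) is consistent, i.e., their classes are equal; consequently the degree of equivalence of T1 with respect to T2 equals 1. -/

import Mathlib

/-- A binary decision tree over features `F` and classes `C`. -/
inductive DTree (F : Type) (C : Type) where
  | leaf (c : C) : DTree F C
  | node (f : F) (t0 t1 : DTree F C) : DTree F C

namespace DTree

variable {F C : Type}

/-- Evaluation of a tree on an input `x : F → Bool`. -/
def eval : DTree F C → (F → Bool) → C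
  | leaf c, _ => c
  | node f t0 t1, x => if x f then t1.eval x else t0.eval x

/-- The rules (root-to-leaf paths with their leaf class) of a tree. -/
def rules : DTree F C → List (List (F × Bool) × C)
  | leaf c => [([], c)]
  | node f t0 t1 =>
      (t0.rules.map fun r => ((f, false) :: r.1, r.2)) ++
      (t1.rules.map fun r => ((f, true) :: r.1, r.2))

/-- The root-to-leaf path followed when evaluating the tree on input `x`. -/
def path : DTree F C → (F → Bool) → List (F × Bool)
  | leaf _, _ => []
  | node f t0 t1, x => (f, x f) :: (if x f then t1.path x else t0.path x)

/-- A tree is non-repeating if no feature occurs more than once along any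
root-to-leaf path. -/
def NonRepeating (T : DTree F C) : Prop :=
  ∀ π ∈ T.rules, (π.1.map Prod.fst).Nodup

end DTree

/-- An input `x` triggers a rule `π` if `x f = v` for every pair `(f, v)` on `π`. -/
def Triggers {F C : Type} (x : F → Bool) (π : List (F × Bool) × C) : Prop :=
  ∀ p ∈ π.1, x p.1 = p.2


lemma eval_of_triggers {F C : Type} (T : DTree F C) :
    ∀ π ∈ T.rules, ∀ x : F → Bool, Triggers x π → T.eval x = π.2 := by
  induction T with
  | leaf c => intro π hπ x _; simp [DTree.rules] at hπ; subst hπ; rfl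
  | node f t0 t1 ih0 ih1 =>
    intro π hπ x hx
    simp only [DTree.rules, List.mem_append, List.mem_map] at hπ
    rcases hπ with ⟨r, hr, rfl⟩ | ⟨r, hr, rfl⟩
    · have hf : x f = false := hx (f, false) List.mem_cons_self
      have : Triggers x r := fun p hp => hx p (List.mem_cons_of_mem _ hp)
      simp [DTree.eval, hf, ih0 r hr x this]
    · have hf : x f = true := hx (f, true) List.mem_cons_self
      have : Triggers x r := fun p hp => hx p (List.mem_cons_of_mem _ hp)
      simp [DTree.eval, hf, ih1 r hr x this]

lemma exists_rule_triggered {F C : Type} (T : DTree F C) (x : F → Bool) :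
    ∃ π ∈ T.rules, Triggers x π := by
  induction T with
  | leaf c => exact ⟨([], c), by simp [DTree.rules], fun p hp => by simp at hp⟩
  | node f t0 t1 ih0 ih1 =>
    cases hf : x f
    · obtain ⟨r, hr, htr⟩ := ih0
      refine ⟨((f, false) :: r.1, r.2), ?_, ?_⟩
      · simp only [DTree.rules, List.mem_append, List.mem_map]
        exact Or.inl ⟨r, hr, rfl⟩
      · intro p hp
        rcases List.mem_cons.1 hp with rfl | hp
        · exact hf
        · exact htr p hp
    · obtain ⟨r, hr, htr⟩ := ih1
      refine ⟨((f, true) :: r.1, r.2), ?_, ?_⟩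
      · simp only [DTree.rules, List.mem_append, List.mem_map]
        exact Or.inr ⟨r, hr, rfl⟩
      · intro p hp
        rcases List.mem_cons.1 hp with rfl | hp
        · exact hf
        · exact htr p hp

/-- if two non-repeating trees are equivalent, then every compatible pair
of rules is consistent (their classes agree), and the degree of equivalence equals 1. -/
theorem doe_eq_one_of_equivalent (F C : Type) [Fintype F]
    (T1 T2 : DTree F C) (hT1 : T1.NonRepeating) (hT2 : T2.NonRepeating)
    (heq : ∀ x : F → Bool, T1.eval x = T2.eval x) :
    (∀ π1 ∈ T1.rules, ∀ π2 ∈ T2.rules,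
        (∃ x : F → Bool, Triggers x π1 ∧ Triggers x π2) → π1.2 = π2.2) ∧
    ((Nat.card {π : List (F × Bool) × C // π ∈ T1.rules ∧ ∃ π2 ∈ T2.rules,
        (∃ x : F → Bool, Triggers x π ∧ Triggers x π2) ∧ π.2 = π2.2} : ℚ) /
      (Nat.card {π : List (F × Bool) × C // π ∈ T1.rules ∧ ∃ π2 ∈ T2.rules,
        ∃ x : F → Bool, Triggers x π ∧ Triggers x π2} : ℚ)) = 1 := by

  have hmain : ∀ π1 ∈ T1.rules, ∀ π2 ∈ T2.rules,
      (∃ x : F → Bool, Triggers x π1 ∧ Triggers x π2) → π1.2 = π2.2 := by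
    intro π1 h1 π2 h2 ⟨x, hx1, hx2⟩
    rw [← eval_of_triggers T1 π1 h1 x hx1, heq, eval_of_triggers T2 π2 h2 x hx2]
  refine ⟨hmain, ?_⟩
  have hsetseq : ∀ π : List (F × Bool) × C,
      (π ∈ T1.rules ∧ ∃ π2 ∈ T2.rules, (∃ x, Triggers x π ∧ Triggers x π2) ∧ π.2 = π2.2)
      ↔ (π ∈ T1.rules ∧ ∃ π2 ∈ T2.rules, ∃ x, Triggers x π ∧ Triggers x π2) := by
    intro π
    constructor
    · rintro ⟨h1, π2, h2, hc, _⟩; exact ⟨h1, π2, h2, hc⟩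
    · rintro ⟨h1, π2, h2, hc⟩; exact ⟨h1, π2, h2, hc, hmain π h1 π2 h2 hc⟩
  have hfin : ∀ P : (List (F × Bool) × C) → Prop,
      Finite {π : List (F × Bool) × C // π ∈ T1.rules ∧ P π} := by
    intro P
    exact Set.Finite.to_subtype
      ((T1.rules.finite_toSet).subset (fun π h => h.1))
  haveI := hfin (fun π => ∃ π2 ∈ T2.rules, (∃ x, Triggers x π ∧ Triggers x π2) ∧ π.2 = π2.2)
  haveI := hfin (fun π => ∃ π2 ∈ T2.rules, ∃ x, Triggers x π ∧ Triggers x π2)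
  have hne : Nonempty {π : List (F × Bool) × C // π ∈ T1.rules ∧
      ∃ π2 ∈ T2.rules, ∃ x, Triggers x π ∧ Triggers x π2} := by
    obtain ⟨π1, h1, ht1⟩ := exists_rule_triggered T1 (fun _ => true)
    obtain ⟨π2, h2, ht2⟩ := exists_rule_triggered T2 (fun _ => true)
    exact ⟨⟨π1, h1, π2, h2, fun _ => true, ht1, ht2⟩⟩
  have hcard : Nat.card {π : List (F × Bool) × C // π ∈ T1.rules ∧ ∃ π2 ∈ T2.rules,
        (∃ x : F → Bool, Triggers x π ∧ Triggers x π2) ∧ π.2 = π2.2}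
      = Nat.card {π : List (F × Bool) × C // π ∈ T1.rules ∧ ∃ π2 ∈ T2.rules,
        ∃ x : F → Bool, Triggers x π ∧ Triggers x π2} :=
    Nat.card_congr (Equiv.subtypeEquivRight hsetseq)
  rw [hcard]
  have hpos : 0 < Nat.card {π : List (F × Bool) × C // π ∈ T1.rules ∧ ∃ π2 ∈ T2.rules,
      ∃ x : F → Bool, Triggers x π ∧ Triggers x π2} := Nat.card_pos
  exact div_self (by positivity)
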